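/- Suppose G > 1 and 0 < γ < 1. Then there exists a unique w_f^* > 0 satisfying c_y(1, G·w_f^*)/c_z(1, G·w_f^*) = G^γ. -/

import Mathlib

open Real Filter Set Topology

/-- Assumption C: `c` is a positive, homogeneous of degree 1, twice continuously
differentiable function on `(0,∞)²` with partial derivatives `cy, cz > 0`, second partial
derivatives `cyy, czz < 0`, and Inada conditions. -/
structure AssumptionC (c cy cz cyy cyz czz : ℝ → ℝ → ℝ) : Prop where
  c_pos : ∀ ⦃y z : ℝ⦄, 0 < y → 0 < z → 0 < c y z
  homog : ∀ ⦃l y z : ℝ⦄, 0 < l → 0 < y → 0 < z → c (l * y) (l * z) = l * c y z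
  hderiv_y : ∀ ⦃y z : ℝ⦄, 0 < y → 0 < z → HasDerivAt (fun u => c u z) (cy y z) y
  hderiv_z : ∀ ⦃y z : ℝ⦄, 0 < y → 0 < z → HasDerivAt (fun v => c y v) (cz y z) z
  hderiv_yy : ∀ ⦃y z : ℝ⦄, 0 < y → 0 < z → HasDerivAt (fun u => cy u z) (cyy y z) y
  hderiv_yz : ∀ ⦃y z : ℝ⦄, 0 < y → 0 < z → HasDerivAt (fun v => cy y v) (cyz y z) z
  hderiv_zy : ∀ ⦃y z : ℝ⦄, 0 < y → 0 < z → HasDerivAt (fun u => cz u z) (cyz y z) y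
  hderiv_zz : ∀ ⦃y z : ℝ⦄, 0 < y → 0 < z → HasDerivAt (fun v => cz y v) (czz y z) z
  cy_pos : ∀ ⦃y z : ℝ⦄, 0 < y → 0 < z → 0 < cy y z
  cz_pos : ∀ ⦃y z : ℝ⦄, 0 < y → 0 < z → 0 < cz y z
  cyy_neg : ∀ ⦃y z : ℝ⦄, 0 < y → 0 < z → cyy y z < 0
  czz_neg : ∀ ⦃y z : ℝ⦄, 0 < y → 0 < z → czz y z < 0
  cont2 : ContinuousOn (fun p : ℝ × ℝ => (cyy p.1 p.2, cyz p.1 p.2, czz p.1 p.2))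
    {p : ℝ × ℝ | 0 < p.1 ∧ 0 < p.2}
  inada_y : ∀ ⦃z : ℝ⦄, 0 < z → Tendsto (fun y => cy y z) (𝓝[>] (0:ℝ)) atTop
  inada_z : ∀ ⦃y : ℝ⦄, 0 < y → Tendsto (fun z => cz y z) (𝓝[>] (0:ℝ)) atTop
section aux
variable {c cy cz cyy cyz czz : ℝ → ℝ → ℝ}

/-- degree-0 homogeneity of `cy` at `y = 1`. -/
lemma cy_scale (hC : AssumptionC c cy cz cyy cyz czz) {l z : ℝ} (hl : 0 < l) (hz : 0 < z) :
    cy l (l * z) = cy 1 z := by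
  have hlz : 0 < l * z := by positivity
  have hinner : HasDerivAt (fun u : ℝ => l * u) l 1 := by
    simpa using (hasDerivAt_id (1:ℝ)).const_mul l
  have h1 : HasDerivAt (fun u => c (l * u) (l * z)) (cy l (l * z) * l) 1 := by
    have houter : HasDerivAt (fun u => c u (l * z)) (cy l (l * z)) (l * 1) := by
      rw [mul_one]; exact hC.hderiv_y hl hlz
    have := houter.comp 1 hinner
    exact this
  have hev : (fun u => l * c u z) =ᶠ[𝓝 (1:ℝ)] fun u => c (l * u) (l * z) := by
    filter_upwards [eventually_gt_nhds (zero_lt_one : (0:ℝ) < 1)] with u hu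
    exact (hC.homog hl hu hz).symm
  have h1' : HasDerivAt (fun u => l * c u z) (cy l (l * z) * l) 1 :=
    h1.congr_of_eventuallyEq hev
  have h2 : HasDerivAt (fun u => l * c u z) (l * cy 1 z) 1 :=
    (hC.hderiv_y one_pos hz).const_mul l
  have h := h1'.unique h2
  have h' : cy l (l * z) * l = cy 1 z * l := by rw [h]; ring
  exact mul_right_cancel₀ hl.ne' h'

lemma cy_inv (hC : AssumptionC c cy cz cyy cyz czz) {z : ℝ} (hz : 0 < z) :
    cy z⁻¹ 1 = cy 1 z := by
  have := cy_scale hC (inv_pos.mpr hz) hz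
  rwa [inv_mul_cancel₀ hz.ne'] at this

lemma cyz_pos1 (hC : AssumptionC c cy cz cyy cyz czz) {z : ℝ} (hz : 0 < z) :
    0 < cyz 1 z := by
  have hinv : 0 < z⁻¹ := inv_pos.mpr hz
  have h1 : HasDerivAt (fun z' : ℝ => cy z'⁻¹ 1) (cyy z⁻¹ 1 * (-(z ^ 2)⁻¹)) z := by
    have houter : HasDerivAt (fun u => cy u 1) (cyy z⁻¹ 1) (z⁻¹) := hC.hderiv_yy hinv one_pos
    have := houter.comp z (hasDerivAt_inv hz.ne')
    exact this
  have hev : (fun z' : ℝ => cy 1 z') =ᶠ[𝓝 z] fun z' => cy z'⁻¹ 1 := by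
    filter_upwards [eventually_gt_nhds hz] with u hu
    exact (cy_inv hC hu).symm
  have h1' : HasDerivAt (fun z' : ℝ => cy 1 z') (cyy z⁻¹ 1 * (-(z ^ 2)⁻¹)) z :=
    h1.congr_of_eventuallyEq hev
  have h := (hC.hderiv_yz one_pos hz).unique h1'
  rw [h]
  have hyy := hC.cyy_neg hinv one_pos
  have hz2 : (0:ℝ) < (z ^ 2)⁻¹ := by positivity
  nlinarith

end aux
/-- If `G > 1` and `0 < γ < 1`, there is a unique `w_f^* > 0` with
`c_y(1, G·w_f^*)/c_z(1, G·w_f^*) = G^γ`. -/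
theorem stmt_10 (c cy cz cyy cyz czz : ℝ → ℝ → ℝ)
    (hC : AssumptionC c cy cz cyy cyz czz) (G γ : ℝ)
    (hG : 1 < G) (hγ0 : 0 < γ) (hγ1 : γ < 1) :
    ∃! w : ℝ, 0 < w ∧ cy 1 (G * w) / cz 1 (G * w) = G ^ γ := by
  have hG0 : (0:ℝ) < G := lt_trans one_pos hG
  have hGpow : (0:ℝ) < G ^ γ := Real.rpow_pos_of_pos hG0 γ
  set F : ℝ → ℝ := fun z => cy 1 z / cz 1 z with hFdef
  -- derivative of F
  have hFd : ∀ z : ℝ, 0 < z → HasDerivAt F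
      ((cyz 1 z * cz 1 z - cy 1 z * czz 1 z) / (cz 1 z) ^ 2) z := fun z hz =>
    (hC.hderiv_yz one_pos hz).div (hC.hderiv_zz one_pos hz) (hC.cz_pos one_pos hz).ne'
  have hFpos : ∀ z : ℝ, 0 < z →
      0 < (cyz 1 z * cz 1 z - cy 1 z * czz 1 z) / (cz 1 z) ^ 2 := by
    intro z hz
    have h1 := cyz_pos1 hC hz
    have h2 := hC.cz_pos one_pos hz
    have h3 := hC.cy_pos one_pos hz
    have h4 := hC.czz_neg one_pos hz
    have hnum : 0 < cyz 1 z * cz 1 z - cy 1 z * czz 1 z := by nlinarith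
    positivity
  have hFc : ContinuousOn F (Ioi (0:ℝ)) := fun z hz =>
    ((hFd z hz).continuousAt).continuousWithinAt
  have hFmono : StrictMonoOn F (Ioi (0:ℝ)) := by
    apply strictMonoOn_of_deriv_pos (convex_Ioi 0) hFc
    intro z hz
    rw [interior_Ioi] at hz
    rw [(hFd z hz).deriv]
    exact hFpos z hz
  -- monotonicity of cy 1 · and cz 1 ·
  have hcymono : StrictMonoOn (fun z => cy 1 z) (Ioi (0:ℝ)) := by
    apply strictMonoOn_of_deriv_pos (convex_Ioi 0)
      (fun z hz => ((hC.hderiv_yz one_pos hz).continuousAt).continuousWithinAt)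
    intro z hz
    rw [interior_Ioi] at hz
    rw [(hC.hderiv_yz one_pos hz).deriv]
    exact cyz_pos1 hC hz
  have hczanti : StrictAntiOn (fun z => cz 1 z) (Ioi (0:ℝ)) := by
    apply strictAntiOn_of_deriv_neg (convex_Ioi 0)
      (fun z hz => ((hC.hderiv_zz one_pos hz).continuousAt).continuousWithinAt)
    intro z hz
    rw [interior_Ioi] at hz
    rw [(hC.hderiv_zz one_pos hz).deriv]
    exact hC.czz_neg one_pos hz
  -- cy 1 z → ∞ as z → ∞
  have hcytop : Tendsto (fun z => cy 1 z) atTop atTop := by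
    have h := (hC.inada_y one_pos).comp tendsto_inv_atTop_nhdsGT_zero
    refine h.congr' ?_
    filter_upwards [eventually_gt_atTop (0:ℝ)] with z hz
    exact cy_inv hC hz
  -- pick z₂ large
  obtain ⟨z₂, hz₂gt, hz₂1⟩ :=
    ((hcytop.eventually_gt_atTop (G ^ γ * cz 1 1)).and (eventually_gt_atTop 1)).exists
  -- pick z₁ small
  have hsmall : ∀ᶠ z in 𝓝[>] (0:ℝ), z < 1 :=
    eventually_nhdsWithin_of_eventually_nhds (eventually_lt_nhds zero_lt_one)
  obtain ⟨z₁, hcz₁, hz₁lt, hz₁pos⟩ :=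
    (((hC.inada_z one_pos).eventually_gt_atTop (cy 1 1 / G ^ γ)).and
      (hsmall.and self_mem_nhdsWithin)).exists
  have hz₁pos : (0:ℝ) < z₁ := hz₁pos
  have hz₂pos : (0:ℝ) < z₂ := lt_trans one_pos hz₂1
  -- F z₁ < G^γ
  have hFz₁ : F z₁ < G ^ γ := by
    have hlt : cy 1 z₁ < cy 1 1 := hcymono (mem_Ioi.mpr hz₁pos) (mem_Ioi.mpr one_pos) hz₁lt
    have h2 : cy 1 1 < cz 1 z₁ * G ^ γ := by
      have := (div_lt_iff₀ hGpow).mp hcz₁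
      linarith
    have hczp := hC.cz_pos one_pos hz₁pos
    rw [hFdef]
    rw [div_lt_iff₀ hczp]
    nlinarith
  -- F z₂ > G^γ
  have hFz₂ : G ^ γ < F z₂ := by
    have hlt : cz 1 z₂ < cz 1 1 := hczanti (mem_Ioi.mpr one_pos) (mem_Ioi.mpr hz₂pos) hz₂1
    have hczp := hC.cz_pos one_pos hz₂pos
    rw [hFdef, lt_div_iff₀ hczp]
    nlinarith
  -- IVT
  have hz₁z₂ : z₁ < z₂ := lt_trans hz₁lt hz₂1
  have hsub : Icc z₁ z₂ ⊆ Ioi (0:ℝ) := fun x hx => lt_of_lt_of_le hz₁pos hx.1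
  obtain ⟨t, htmem, htF⟩ := intermediate_value_Icc hz₁z₂.le (hFc.mono hsub)
    ⟨hFz₁.le, hFz₂.le⟩
  have htpos : 0 < t := hsub htmem
  refine ⟨t / G, ⟨by positivity, ?_⟩, ?_⟩
  · have ht : G * (t / G) = t := by field_simp
    rw [ht]
    exact htF
  · rintro w ⟨hwpos, hweq⟩
    have hGw : G * w ∈ Ioi (0:ℝ) := mem_Ioi.mpr (by positivity)
    have heq : F (G * w) = F t := by rw [htF]; exact hweq
    have := hFmono.injOn hGw (mem_Ioi.mpr htpos) heq
    field_simp
    linarith
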